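/- arXiv:2603.20822 — 2 statements merged into one kernel-verified Lean document; each statement's English description precedes it below -/
import Mathlib

section
/- Let n ∈ {1, 2, 3, 4, 6} and let a, b, c, d be integers with a·d − b·c ∈ {1, −1} and with c = n or c = −n. Then there exist integers y₁, x₂, y₂ ∈ {1, −1} and integers z₁, z₂ such that, writing Q₁ for the 2×2 integer matrix with rows (1, z₁), (0, y₁) and Q₂ for the 2×2 integer matrix with rows (x₂, z₂), (0, y₂), one has Q₂ · A · Q₁ = the matrix with rows (1, 0), (n, 1), where A is the matrix with rows (a, b), (c, d). -/
lemma unit_pm (n : ℕ) (hn : n ∈ ({1, 2, 3, 4, 6} : Set ℕ)) (a : ℤ)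
    (ha : IsUnit (a : ZMod n)) : ∃ x : ℤ, (x = 1 ∨ x = -1) ∧ (n : ℤ) ∣ (a - x) := by
  have key : ∀ u : ZMod n, IsUnit u → u = 1 ∨ u = -1 := by
    simp only [Set.mem_insert_iff, Set.mem_singleton_iff] at hn
    rcases hn with rfl | rfl | rfl | rfl | rfl <;> decide
  rcases key _ ha with h | h
  · refine ⟨1, Or.inl rfl, (ZMod.intCast_zmod_eq_zero_iff_dvd (a - 1) n).mp ?_⟩
    push_cast; rw [h]; ring
  · refine ⟨-1, Or.inr rfl, (ZMod.intCast_zmod_eq_zero_iff_dvd (a - (-1)) n).mp ?_⟩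
    push_cast; rw [h]; ring

/-- The explicit normal-form claim from the proof of the gluing lemma:
for `n ∈ {1, 2, 3, 4, 6}` and a matrix `!![a, b; c, d]` with determinant `±1`
and `c = ±n`, there are upper-triangular unit matrices `Q₁ = !![1, z₁; 0, y₁]`
and `Q₂ = !![x₂, z₂; 0, y₂]` with `Q₂ * A * Q₁ = !![1, 0; n, 1]`. -/
theorem exists_triangular_units_normal_form (n : ℕ)
    (hn : n ∈ ({1, 2, 3, 4, 6} : Set ℕ))
    (a b c d : ℤ)
    (hdet : a * d - b * c = 1 ∨ a * d - b * c = -1)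
    (hc : c = (n : ℤ) ∨ c = -(n : ℤ)) :
    ∃ y₁ x₂ y₂ z₁ z₂ : ℤ,
      (y₁ = 1 ∨ y₁ = -1) ∧ (x₂ = 1 ∨ x₂ = -1) ∧ (y₂ = 1 ∨ y₂ = -1) ∧
        !![x₂, z₂; 0, y₂] * !![a, b; c, d] * !![1, z₁; 0, y₁]
          = !![1, 0; (n : ℤ), 1] := by
  obtain ⟨δ, hδ1, hδ⟩ : ∃ δ : ℤ, (δ = 1 ∨ δ = -1) ∧ a * d - b * c = δ := by
    rcases hdet with h | h
    · exact ⟨1, Or.inl rfl, h⟩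
    · exact ⟨-1, Or.inr rfl, h⟩
  have hδ2 : δ * δ = 1 := by rcases hδ1 with rfl | rfl <;> ring
  have hcz : (c : ZMod n) = 0 := by
    rcases hc with rfl | rfl <;> push_cast <;> simp
  have hau : IsUnit (a : ZMod n) := by
    refine IsUnit.of_mul_eq_one ((d : ZMod n) * (δ : ZMod n)) ?_
    have h1 : ((a * d - b * c : ℤ) : ZMod n) = ((δ : ℤ) : ZMod n) := by rw [hδ]
    have h2 : ((δ * δ : ℤ) : ZMod n) = ((1 : ℤ) : ZMod n) := by rw [hδ2]
    push_cast at h1 h2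
    rw [hcz] at h1
    calc (a : ZMod n) * ((d : ZMod n) * (δ : ZMod n))
        = ((a : ZMod n) * d - b * 0) * δ := by ring
      _ = (δ : ZMod n) * δ := by rw [h1]
      _ = 1 := h2
  obtain ⟨x₂, hx₂, hdvdx⟩ := unit_pm n hn a hau
  have hx2sq : x₂ * x₂ = 1 := by rcases hx₂ with rfl | rfl <;> ring
  obtain ⟨y₂, hy₂, hy₂c⟩ : ∃ y₂ : ℤ, (y₂ = 1 ∨ y₂ = -1) ∧ y₂ * c = (n : ℤ) := by
    rcases hc with rfl | rfl
    · exact ⟨1, Or.inl rfl, by ring⟩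
    · exact ⟨-1, Or.inr rfl, by ring⟩
  have hy2sq : y₂ * y₂ = 1 := by rcases hy₂ with rfl | rfl <;> ring
  obtain ⟨z₂, hz₂⟩ : ∃ z₂ : ℤ, z₂ * c = 1 - x₂ * a := by
    obtain ⟨k, hk⟩ := hdvdx
    rcases hc with rfl | rfl
    · exact ⟨-x₂ * k, by rcases hx₂ with rfl | rfl <;> linarith [hk]⟩
    · exact ⟨x₂ * k, by rcases hx₂ with rfl | rfl <;> linarith [hk]⟩
  have hy₁ : x₂ * y₂ * δ = 1 ∨ x₂ * y₂ * δ = -1 := by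
    rcases hx₂ with rfl | rfl <;> rcases hy₂ with rfl | rfl <;>
      rcases hδ1 with rfl | rfl <;> norm_num
  refine ⟨x₂ * y₂ * δ, x₂, y₂, -(x₂ * b + z₂ * d) * (x₂ * y₂ * δ), z₂,
    hy₁, hx₂, hy₂, ?_⟩
  ext i j
  fin_cases i <;> fin_cases j <;>
    simp [Matrix.mul_apply, Fin.sum_univ_succ]
  · linear_combination hz₂
  · linear_combination (-(x₂ * b + z₂ * d) * x₂ * y₂ * δ) * hz₂
  · linear_combination hy₂c
  · linear_combination (x₂ * δ * (d - c * x₂ * b - c * z₂ * d)) * hy2sq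
      - (x₂ * δ * d) * hz₂ + (δ * (a * d - b * c)) * hx2sq + δ * hδ + hδ2
end

section
/- Let n ∈ {1, 2, 3, 4, 6}. Let A and A' be 2×2 integer matrices with rows (a, b), (c, d) and (a', b'), (c', d') respectively, such that a·d − b·c ∈ {1, −1}, a'·d' − b'·c' ∈ {1, −1}, |c| = n and |c'| = n. Then there exist matrices P₁ and P₂ in U such that A = P₂ · A' · P₁, where U denotes the set of 2×2 integer matrices of the form with rows (x, z), (0, y) with x, y ∈ {1, −1} and z ∈ ℤ. -/
def U : Set (Matrix (Fin 2) (Fin 2) ℤ) :=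
  {M | ∃ x y z : ℤ, (x = 1 ∨ x = -1) ∧ (y = 1 ∨ y = -1) ∧ M = !![x, z; 0, y]}

lemma zmod_pm (n : ℕ) (hn : n = 1 ∨ n = 2 ∨ n = 3 ∨ n = 4 ∨ n = 6)
    (D D' : ZMod n) (h : IsUnit D) (h' : IsUnit D') : D = D' ∨ D = -D' := by
  rcases hn with rfl|rfl|rfl|rfl|rfl <;> revert D D' <;> decide

/-- The double coset claim at the core of the gluing lemma: two integer matrices
with determinant `±1` whose lower-left entries have absolute value
`n ∈ {1, 2, 3, 4, 6}` lie in the same `U`-double coset. -/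
theorem double_coset_of_det_pm_one (n : ℕ)
    (hn : n ∈ ({1, 2, 3, 4, 6} : Set ℕ))
    (a b c d a' b' c' d' : ℤ)
    (hdet : a * d - b * c = 1 ∨ a * d - b * c = -1)
    (hdet' : a' * d' - b' * c' = 1 ∨ a' * d' - b' * c' = -1)
    (hc : |c| = (n : ℤ)) (hc' : |c'| = (n : ℤ)) :
    ∃ P₁ ∈ U, ∃ P₂ ∈ U,
      !![a, b; c, d] = P₂ * !![a', b'; c', d'] * P₁ := by
  have hn5 : n = 1 ∨ n = 2 ∨ n = 3 ∨ n = 4 ∨ n = 6 := by simpa using hn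
  have hnpos : (0:ℤ) < (n:ℤ) := by rcases hn5 with rfl|rfl|rfl|rfl|rfl <;> norm_num
  obtain ⟨δ, hδpm, hδ⟩ : ∃ δ:ℤ, (δ = 1 ∨ δ = -1) ∧ a*d - b*c = δ := by
    rcases hdet with h|h
    exacts [⟨1, Or.inl rfl, h⟩, ⟨-1, Or.inr rfl, h⟩]
  obtain ⟨δ', hδ'pm, hδ'⟩ : ∃ e:ℤ, (e = 1 ∨ e = -1) ∧ a'*d' - b'*c' = e := by
    rcases hdet' with h|h
    exacts [⟨1, Or.inl rfl, h⟩, ⟨-1, Or.inr rfl, h⟩]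
  have hδ2 : δ*δ = 1 := by rcases hδpm with rfl|rfl <;> norm_num
  have hδ'2 : δ'*δ' = 1 := by rcases hδ'pm with rfl|rfl <;> norm_num
  have hcpm : c = (n:ℤ) ∨ c = -(n:ℤ) := (abs_eq (le_of_lt hnpos)).mp hc
  have hc'pm : c' = (n:ℤ) ∨ c' = -(n:ℤ) := (abs_eq (le_of_lt hnpos)).mp hc'
  have hcne : c ≠ 0 := by rcases hcpm with rfl|rfl <;> omega
  have hndc : (n:ℤ) ∣ c := by rcases hcpm with rfl|rfl <;> simp
  have hndc' : (n:ℤ) ∣ c' := by rcases hc'pm with rfl|rfl <;> simp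
  -- in ZMod n
  have hA : (a : ZMod n) * (d : ZMod n) = ((δ:ℤ) : ZMod n) := by
    have h0 : ((a*d - δ : ℤ) : ZMod n) = 0 := by
      rw [ZMod.intCast_zmod_eq_zero_iff_dvd]
      have : a*d - δ = b*c := by linarith
      rw [this]; exact hndc.mul_left b
    push_cast at h0
    linear_combination h0
  have hA' : (a' : ZMod n) * (d' : ZMod n) = ((δ':ℤ) : ZMod n) := by
    have h0 : ((a'*d' - δ' : ℤ) : ZMod n) = 0 := by
      rw [ZMod.intCast_zmod_eq_zero_iff_dvd]
      have : a'*d' - δ' = b'*c' := by linarith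
      rw [this]; exact hndc'.mul_left b'
    push_cast at h0
    linear_combination h0
  have hDu : IsUnit ((d:ℤ) : ZMod n) := by
    apply IsUnit.of_mul_eq_one ((a:ZMod n) * ((δ:ℤ) : ZMod n))
    have : ((d:ZMod n)) * ((a:ZMod n) * ((δ:ℤ):ZMod n)) = ((a:ZMod n)*(d:ZMod n))*((δ:ℤ):ZMod n) := by ring
    rw [this, hA, ← Int.cast_mul, hδ2, Int.cast_one]
  have hD'u : IsUnit ((d':ℤ) : ZMod n) := by
    apply IsUnit.of_mul_eq_one ((a':ZMod n) * ((δ':ℤ) : ZMod n))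
    have : ((d':ZMod n)) * ((a':ZMod n) * ((δ':ℤ):ZMod n)) = ((a':ZMod n)*(d':ZMod n))*((δ':ℤ):ZMod n) := by ring
    rw [this, hA', ← Int.cast_mul, hδ'2, Int.cast_one]
  obtain ⟨v, hvpm, hD⟩ : ∃ v:ℤ, (v = 1 ∨ v = -1) ∧ (d : ZMod n) = ((v:ℤ):ZMod n) * (d' : ZMod n) := by
    rcases zmod_pm n hn5 (d : ZMod n) (d' : ZMod n) hDu hD'u with h|h
    · exact ⟨1, Or.inl rfl, by rw [h]; push_cast; ring⟩
    · exact ⟨-1, Or.inr rfl, by rw [h]; push_cast; ring⟩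
  have hv2 : v*v = 1 := by rcases hvpm with rfl|rfl <;> norm_num
  obtain ⟨u, hu⟩ : ∃ u:ℤ, u = v*δ*δ' := ⟨_, rfl⟩
  have hupm : u = 1 ∨ u = -1 := by
    rcases hvpm with rfl|rfl <;> rcases hδpm with rfl|rfl <;> rcases hδ'pm with rfl|rfl <;> simp [hu]
  -- a ≡ u a' mod n
  have hAcong : (a : ZMod n) = ((u:ℤ):ZMod n) * (a' : ZMod n) := by
    apply hDu.mul_right_cancel
    push_cast [hu]
    push_cast [hu] at hD hA hA'
    have hv2c : (v:ZMod n)*(v:ZMod n) = 1 := by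
      have := congrArg (Int.cast : ℤ → ZMod n) hv2; push_cast at this; exact this
    have hδ'2c : (δ':ZMod n)*(δ':ZMod n) = 1 := by
      have := congrArg (Int.cast : ℤ → ZMod n) hδ'2; push_cast at this; exact this
    linear_combination hA - (v:ZMod n)*(δ:ZMod n)*(δ':ZMod n)*(a':ZMod n)*hD
      - (v:ZMod n)*(v:ZMod n)*(δ:ZMod n)*(δ':ZMod n)*hA'
      - (δ:ZMod n)*(δ':ZMod n)*(δ':ZMod n)*hv2c
      - (δ:ZMod n)*hδ'2c
  -- divisibilities over ℤ
  have hdva : (n:ℤ) ∣ a - u*a' := by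
    rw [← ZMod.intCast_zmod_eq_zero_iff_dvd]
    push_cast
    rw [hAcong]; ring
  have hdvd : (n:ℤ) ∣ d - v*d' := by
    rw [← ZMod.intCast_zmod_eq_zero_iff_dvd]
    push_cast
    rw [hD]; ring
  obtain ⟨z, hz⟩ : ∃ z, a - u*a' = c'*z := by
    obtain ⟨k, hk⟩ := hdva
    rcases hc'pm with rfl|rfl
    exacts [⟨k, hk⟩, ⟨-k, by linarith⟩]
  obtain ⟨z', hz'⟩ : ∃ w, d - v*d' = c*w := by
    obtain ⟨k, hk⟩ := hdvd
    rcases hcpm with rfl|rfl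
    exacts [⟨k, hk⟩, ⟨-k, by linarith⟩]
  obtain ⟨y, hypm, hy⟩ : ∃ y:ℤ, (y = 1 ∨ y = -1) ∧ c = y*c' := by
    rcases hcpm with rfl|rfl <;> rcases hc'pm with rfl|rfl
    exacts [⟨1, Or.inl rfl, by ring⟩, ⟨-1, Or.inr rfl, by ring⟩,
      ⟨-1, Or.inr rfl, by ring⟩, ⟨1, Or.inl rfl, by ring⟩]
  have hy2 : y*y = 1 := by rcases hypm with rfl|rfl <;> norm_num
  have hy'pm : v*y = 1 ∨ v*y = -1 := by
    rcases hvpm with rfl|rfl <;> rcases hypm with rfl|rfl <;> norm_num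
  have hb : b = a*z' + (u*b' + z*d')*(v*y) := by
    apply mul_right_cancel₀ hcne
    linear_combination (-1:ℤ)*hδ + δ*δ'*δ'*hv2 + δ*hδ'2 + u*v*hδ' + v*d'*hz
      - (u*b'+z*d')*(v*c')*hy2 - (u*b'+z*d')*(v*y)*hy + a*hz' + v*δ'*hu
  refine ⟨!![1, z'; 0, v*y], ⟨1, v*y, z', Or.inl rfl, hy'pm, rfl⟩,
    !![u, z; 0, y], ⟨u, y, z, hupm, hypm, rfl⟩, ?_⟩
  have h1 : !![u, z; 0, y] * !![a', b'; c', d'] = !![u*a' + z*c', u*b' + z*d'; y*c', y*d'] := by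
    ext i j
    fin_cases i <;> fin_cases j <;>
      simp [Matrix.mul_apply, Fin.sum_univ_succ]
  rw [h1]
  have h2 : !![u*a' + z*c', u*b' + z*d'; y*c', y*d'] * !![1, z'; 0, v*y]
      = !![u*a' + z*c', (u*a' + z*c')*z' + (u*b' + z*d')*(v*y);
           y*c', y*c'*z' + y*d'*(v*y)] := by
    ext i j
    fin_cases i <;> fin_cases j <;>
      simp [Matrix.mul_apply, Fin.sum_univ_succ]
  rw [h2]
  congr 1
  · ext i j
    fin_cases i <;> fin_cases j <;> simp
    · linarith [hz]
    · rw [hb]; linear_combination z'*hz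
    · linarith [hy]
    · linear_combination hz' + z'*hy - v*d'*hy2
end
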